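/- Let E and F be finite-dimensional real inner product spaces with E nontrivial, let λ ≥ 1 be a real number, and let A, B : E → F be continuous linear maps with operator norms ‖A‖ ≤ λ and ‖B‖ ≤ λ. Then δ(Γ_A, Γ_B) ≥ (√2 / (2λ√(1+λ²))) · ‖A − B‖, where ‖A − B‖ is the operator norm of A − B. -/

import Mathlib

open Set Filter

/-- The distance `δ(L₁, L₂)`: the Hausdorff distance between `L₁ ∩ 𝕊` and `L₂ ∩ 𝕊`,
where `𝕊` is the unit sphere. -/
noncomputable def sphereDist {X : Type*} [NormedAddCommGroup X] (S T : Set X) : ℝ :=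
  Metric.hausdorffDist (S ∩ Metric.sphere 0 1) (T ∩ Metric.sphere 0 1)

/-- The graph `Γ_A = {(u, A u) : u ∈ E}` of a continuous linear map `A : E → F`, as a
subset of `E × F` equipped with the Euclidean product norm `‖(u,v)‖ = (‖u‖² + ‖v‖²)^(1/2)`. -/
def graphSet {E F : Type*} [NormedAddCommGroup E] [InnerProductSpace ℝ E]
    [NormedAddCommGroup F] [InnerProductSpace ℝ F] (A : E →L[ℝ] F) :
    Set (WithLp 2 (E × F)) :=
  {p | (WithLp.equiv 2 (E × F) p).2 = A (WithLp.equiv 2 (E × F) p).1}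

section Aux

variable {E F : Type*} [NormedAddCommGroup E] [InnerProductSpace ℝ E]
    [NormedAddCommGroup F] [InnerProductSpace ℝ F]

lemma mem_graphSet_iff (A : E →L[ℝ] F) (p : WithLp 2 (E × F)) :
    p ∈ graphSet A ↔ p.snd = A p.fst := Iff.rfl

/-- The normalized graph point of a unit vector. -/
noncomputable def graphPt (A : E →L[ℝ] F) (u : E) : WithLp 2 (E × F) :=
  ‖(WithLp.equiv 2 (E × F)).symm (u, A u)‖⁻¹ • (WithLp.equiv 2 (E × F)).symm (u, A u)

lemma graphPt_fst (A : E →L[ℝ] F) (u : E) :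
    (graphPt A u).fst = ‖(WithLp.equiv 2 (E × F)).symm (u, A u)‖⁻¹ • u := rfl

lemma graphPt_snd (A : E →L[ℝ] F) (u : E) :
    (graphPt A u).snd = ‖(WithLp.equiv 2 (E × F)).symm (u, A u)‖⁻¹ • A u := rfl

lemma norm_sq_graph_vec (A : E →L[ℝ] F) (u : E) :
    ‖(WithLp.equiv 2 (E × F)).symm (u, A u)‖ ^ 2 = ‖u‖ ^ 2 + ‖A u‖ ^ 2 := by
  rw [WithLp.prod_norm_sq_eq_of_L2]; rfl

lemma one_le_norm_graph_vec (A : E →L[ℝ] F) {u : E} (hu : ‖u‖ = 1) :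
    1 ≤ ‖(WithLp.equiv 2 (E × F)).symm (u, A u)‖ := by
  have h := norm_sq_graph_vec A u
  nlinarith [norm_nonneg ((WithLp.equiv 2 (E × F)).symm (u, A u)), sq_nonneg (‖A u‖),
    norm_nonneg (A u)]

lemma norm_graph_vec_le (A : E →L[ℝ] F) {lam : ℝ} (hA : ‖A‖ ≤ lam) {u : E} (hu : ‖u‖ = 1) :
    ‖(WithLp.equiv 2 (E × F)).symm (u, A u)‖ ≤ Real.sqrt (1 + lam ^ 2) := by
  have h := norm_sq_graph_vec A u
  have hAu : ‖A u‖ ≤ lam := by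
    calc ‖A u‖ ≤ ‖A‖ * ‖u‖ := A.le_opNorm u
    _ ≤ lam := by rw [hu]; simpa using hA
  rw [← Real.sqrt_sq (norm_nonneg _)]
  apply Real.sqrt_le_sqrt
  nlinarith [norm_nonneg (A u)]

lemma graphPt_mem (A : E →L[ℝ] F) (u : E) : graphPt A u ∈ graphSet A := by
  rw [mem_graphSet_iff, graphPt_fst, graphPt_snd, map_smul]

lemma graphPt_mem_sphere (A : E →L[ℝ] F) {u : E} (hu : ‖u‖ = 1) :
    graphPt A u ∈ Metric.sphere (0 : WithLp 2 (E × F)) 1 := by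
  have h1 : (1 : ℝ) ≤ ‖(WithLp.equiv 2 (E × F)).symm (u, A u)‖ := one_le_norm_graph_vec A hu
  have h0 : ‖(WithLp.equiv 2 (E × F)).symm (u, A u)‖ ≠ 0 := by linarith
  simp only [Metric.mem_sphere, dist_zero_right, graphPt, norm_smul, norm_inv,
    Real.norm_eq_abs, abs_of_nonneg (norm_nonneg _)]
  field_simp

/-- Key estimate: for a unit vector `u` and any point `q` on the graph of `B`,
`‖(A-B) u‖ ≤ √2 · λ · √(1+λ²) · dist (graphPt A u) q`. -/
lemma key_estimate {lam : ℝ} (hlam : 1 ≤ lam) (A B : E →L[ℝ] F)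
    (hA : ‖A‖ ≤ lam) (hB : ‖B‖ ≤ lam) {u : E} (hu : ‖u‖ = 1)
    {q : WithLp 2 (E × F)} (hqB : q ∈ graphSet B) :
    ‖(A - B) u‖ ≤ Real.sqrt 2 * lam * Real.sqrt (1 + lam ^ 2) * dist (graphPt A u) q := by
  set α := ‖(WithLp.equiv 2 (E × F)).symm (u, A u)‖ with hα
  have h1 : (1 : ℝ) ≤ α := one_le_norm_graph_vec A hu
  have hα0 : 0 < α := by linarith
  have hαle : α ≤ Real.sqrt (1 + lam ^ 2) := norm_graph_vec_le A hA hu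
  set w := q.fst with hw
  have hq2 : q.snd = B w := hqB
  set a := ‖α⁻¹ • u - w‖ with ha
  set b := ‖α⁻¹ • A u - B w‖ with hb
  have ha0 : 0 ≤ a := norm_nonneg _
  have hb0 : 0 ≤ b := norm_nonneg _
  have hdist : dist (graphPt A u) q = Real.sqrt (a ^ 2 + b ^ 2) := by
    rw [WithLp.prod_dist_eq_of_L2]
    have e1 : dist (graphPt A u).fst q.fst = a := by rw [dist_eq_norm, graphPt_fst]
    have e2 : dist (graphPt A u).snd q.snd = b := by rw [dist_eq_norm, graphPt_snd, hq2]
    rw [e1, e2]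
  -- a + b ≤ √2 √(a²+b²)
  have hab : a + b ≤ Real.sqrt 2 * Real.sqrt (a ^ 2 + b ^ 2) := by
    rw [← Real.sqrt_mul_self (by positivity : (0:ℝ) ≤ a + b), ← Real.sqrt_mul (by norm_num)]
    apply Real.sqrt_le_sqrt
    nlinarith [sq_nonneg (a - b)]
  -- triangle inequality chain
  have hBu : ‖B w - B (α⁻¹ • u)‖ ≤ lam * a := by
    calc ‖B w - B (α⁻¹ • u)‖ = ‖B (w - α⁻¹ • u)‖ := by rw [map_sub]
    _ ≤ ‖B‖ * ‖w - α⁻¹ • u‖ := B.le_opNorm _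
    _ ≤ lam * a := by
        rw [ha, ← norm_neg (α⁻¹ • u - w)]
        have : -(α⁻¹ • u - w) = w - α⁻¹ • u := by abel
        rw [this]
        exact mul_le_mul_of_nonneg_right hB (norm_nonneg _)
  have hmain : α⁻¹ * ‖(A - B) u‖ ≤ lam * (a + b) := by
    have : α⁻¹ * ‖(A - B) u‖ = ‖α⁻¹ • A u - α⁻¹ • B u‖ := by
      rw [← smul_sub, norm_smul, Real.norm_eq_abs, abs_of_pos (by positivity)]
      simp [ContinuousLinearMap.sub_apply]
    rw [this]
    have htri : ‖α⁻¹ • A u - α⁻¹ • B u‖ ≤ b + ‖B w - B (α⁻¹ • u)‖ := by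
      have : α⁻¹ • A u - α⁻¹ • B u = (α⁻¹ • A u - B w) + (B w - B (α⁻¹ • u)) := by
        rw [map_smul]; abel
      rw [this]
      exact norm_add_le _ _
    calc ‖α⁻¹ • A u - α⁻¹ • B u‖ ≤ b + lam * a := by linarith
    _ ≤ lam * b + lam * a := by nlinarith
    _ = lam * (a + b) := by ring
  have hfin : ‖(A - B) u‖ ≤ α * (lam * (a + b)) := by
    have := mul_le_mul_of_nonneg_left hmain (le_of_lt hα0)
    rwa [← mul_assoc, mul_inv_cancel₀ (ne_of_gt hα0), one_mul] at this
  rw [hdist]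
  calc ‖(A - B) u‖ ≤ α * (lam * (a + b)) := hfin
  _ ≤ Real.sqrt (1 + lam ^ 2) * (lam * (Real.sqrt 2 * Real.sqrt (a ^ 2 + b ^ 2))) := by
      apply mul_le_mul hαle _ (by positivity) (Real.sqrt_nonneg _)
      exact mul_le_mul_of_nonneg_left hab (by linarith)
  _ = Real.sqrt 2 * lam * Real.sqrt (1 + lam ^ 2) * Real.sqrt (a ^ 2 + b ^ 2) := by ring

end Aux

/-- **Inequality (3.1) of the paper.** The Grassmannian distance between the graphs of two
continuous linear maps of operator norm at most `λ` dominates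
`(√2 / (2λ√(1+λ²))) · ‖A − B‖`. -/
theorem graph_sphereDist_ge {E F : Type*} [NormedAddCommGroup E] [InnerProductSpace ℝ E]
    [NormedAddCommGroup F] [InnerProductSpace ℝ F]
    [FiniteDimensional ℝ E] [FiniteDimensional ℝ F] [Nontrivial E]
    (lam : ℝ) (hlam : 1 ≤ lam) (A B : E →L[ℝ] F) (hA : ‖A‖ ≤ lam) (hB : ‖B‖ ≤ lam) :
    Real.sqrt 2 / (2 * lam * Real.sqrt (1 + lam ^ 2)) * ‖A - B‖ ≤
      sphereDist (graphSet A) (graphSet B) := by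
  have hlam0 : (0:ℝ) < lam := lt_of_lt_of_le one_pos hlam
  have hs0 : (0:ℝ) < Real.sqrt (1 + lam ^ 2) := Real.sqrt_pos.2 (by positivity)
  have h2 : (0:ℝ) < Real.sqrt 2 := Real.sqrt_pos.2 (by norm_num)
  set c : ℝ := Real.sqrt 2 / (2 * lam * Real.sqrt (1 + lam ^ 2)) with hc
  have hc0 : 0 < c := by positivity
  -- a unit vector in E
  obtain ⟨x, hx⟩ := exists_ne (0 : E)
  set u₀ : E := ‖x‖⁻¹ • x with hu₀def
  have hu₀ : ‖u₀‖ = 1 := by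
    rw [hu₀def, norm_smul, norm_inv, norm_norm, inv_mul_cancel₀ (norm_ne_zero_iff.2 hx)]
  -- nonemptiness and boundedness
  have hneA : (graphSet A ∩ Metric.sphere (0 : WithLp 2 (E × F)) 1).Nonempty :=
    ⟨graphPt A u₀, graphPt_mem A u₀, graphPt_mem_sphere A hu₀⟩
  have hneB : (graphSet B ∩ Metric.sphere (0 : WithLp 2 (E × F)) 1).Nonempty :=
    ⟨graphPt B u₀, graphPt_mem B u₀, graphPt_mem_sphere B hu₀⟩
  have hbddA : Bornology.IsBounded (graphSet A ∩ Metric.sphere (0 : WithLp 2 (E × F)) 1) :=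
    (Metric.isBounded_sphere).subset inter_subset_right
  have hbddB : Bornology.IsBounded (graphSet B ∩ Metric.sphere (0 : WithLp 2 (E × F)) 1) :=
    (Metric.isBounded_sphere).subset inter_subset_right
  have hedist : EMetric.hausdorffEdist (graphSet A ∩ Metric.sphere (0 : WithLp 2 (E × F)) 1)
      (graphSet B ∩ Metric.sphere (0 : WithLp 2 (E × F)) 1) ≠ ⊤ :=
    Metric.hausdorffEdist_ne_top_of_nonempty_of_bounded hneA hneB hbddA hbddB
  have hδ0 : 0 ≤ sphereDist (graphSet A) (graphSet B) := Metric.hausdorffDist_nonneg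
  rw [mul_comm, ← le_div_iff₀ hc0]
  apply ContinuousLinearMap.opNorm_le_of_unit_norm (by positivity)
  intro u hu
  rw [le_div_iff₀ hc0, mul_comm]
  -- c * ‖(A-B) u‖ ≤ infDist (graphPt A u) (Γ_B ∩ 𝕊) ≤ hausdorffDist
  have hinf : c * ‖(A - B) u‖ ≤
      Metric.infDist (graphPt A u) (graphSet B ∩ Metric.sphere (0 : WithLp 2 (E × F)) 1) := by
    rw [Metric.infDist_eq_iInf]
    have : Nonempty ↥(graphSet B ∩ Metric.sphere (0 : WithLp 2 (E × F)) 1) := hneB.to_subtype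
    apply le_ciInf
    rintro ⟨q, hq⟩
    have hkey := key_estimate hlam A B hA hB hu hq.1
    have hrw : c * (Real.sqrt 2 * lam * Real.sqrt (1 + lam ^ 2)) = 1 := by
      have h22 : Real.sqrt 2 * Real.sqrt 2 = 2 := Real.mul_self_sqrt (by norm_num)
      rw [hc]
      field_simp
      linear_combination h22
    calc c * ‖(A - B) u‖
        ≤ c * (Real.sqrt 2 * lam * Real.sqrt (1 + lam ^ 2) * dist (graphPt A u) q) :=
          mul_le_mul_of_nonneg_left hkey (le_of_lt hc0)
      _ = dist (graphPt A u) q := by rw [← mul_assoc, hrw, one_mul]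
  calc c * ‖(A - B) u‖
      ≤ Metric.infDist (graphPt A u) (graphSet B ∩ Metric.sphere (0 : WithLp 2 (E × F)) 1) :=
        hinf
    _ ≤ sphereDist (graphSet A) (graphSet B) :=
        Metric.infDist_le_hausdorffDist_of_mem ⟨graphPt_mem A u, graphPt_mem_sphere A hu⟩ hedist
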